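/- Let G be a context-free grammar over a partially ordered terminal alphabet Σ in which every nonterminal is bireachable, and suppose that L_A(G) is a chain and R_{A,w}(G) is a chain for every nonterminal A and every w ∈ Σ*. Then 𝓛(G) has polynomial antichain growth. -/

import Mathlib

open Filter
open scoped ENNReal

/-- The lexicographic partial order on words induced by a strict order `r` on letters:
`ε R w` for all `w`, and `(x :: w) R (y :: w')` iff `r x y`, or `x = y` and `w R w'`. -/
inductive LexR {α : Type*} (r : α → α → Prop) : List α → List α → Prop
  | nil (w : List α) : LexR r [] w
  | head {x y : α} (w w' : List α) (h : r x y) : LexR r (x :: w) (y :: w')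
  | cons (x : α) {w w' : List α} (h : LexR r w w') : LexR r (x :: w) (x :: w')

/-- Two words are comparable (`u ∼ v`) if `u R v` or `v R u`. -/
def LexComp {α : Type*} (r : α → α → Prop) (u v : List α) : Prop :=
  LexR r u v ∨ LexR r v u

/-- A language is an antichain if any two distinct words of it are incomparable. -/
def IsAntichainLang {α : Type*} (r : α → α → Prop) (L : Set (List α)) : Prop :=
  ∀ u ∈ L, ∀ v ∈ L, u ≠ v → ¬ LexComp r u v

/-- A language is a quasiantichain if any two words of it are incomparable or one is a
prefix of the other. -/
def IsQuasiantichainLang {α : Type*} (r : α → α → Prop) (L : Set (List α)) : Prop :=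
  ∀ u ∈ L, ∀ v ∈ L, u <+: v ∨ v <+: u ∨ ¬ LexComp r u v

/-- A language is a chain if any two words of it are comparable. -/
def IsChainLang {α : Type*} (r : α → α → Prop) (L : Set (List α)) : Prop :=
  ∀ u ∈ L, ∀ v ∈ L, LexComp r u v

/-- `|L|_{=n}`: the number of words of length `n` in `L`. -/
noncomputable def countLen {α : Type*} (L : Set (List α)) (n : ℕ) : ℕ :=
  {w ∈ L | w.length = n}.ncard

/-- `L` has exponential growth of order `ε` if `limsup |L|_{=n} / 2^(εn) > 0`. -/
def ExpGrowthOrder {α : Type*} (L : Set (List α)) (ε : ℝ) : Prop :=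
  0 < Filter.limsup (fun n : ℕ => (countLen L n : ℝ≥0∞) / (2 : ℝ≥0∞) ^ (ε * n)) Filter.atTop

/-- `L` has exponential growth if it has exponential growth of some order `ε > 0`. -/
def ExpGrowth {α : Type*} (L : Set (List α)) : Prop :=
  ∃ ε : ℝ, 0 < ε ∧ ExpGrowthOrder L ε

/-- `L` has polynomial growth if `limsup |L|_{=n} / n^k < ∞` for some `k`. -/
def PolyGrowth {α : Type*} (L : Set (List α)) : Prop :=
  ∃ k : ℕ, Filter.limsup (fun n : ℕ => (countLen L n : ℝ≥0∞) / (n : ℝ≥0∞) ^ k) Filter.atTop < ⊤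

/-- `L` is an antichain family if the set of words of length `n` in `L` is an antichain
for every `n`. -/
def AntichainFamily {α : Type*} (r : α → α → Prop) (L : Set (List α)) : Prop :=
  ∀ n : ℕ, IsAntichainLang r {w ∈ L | w.length = n}

/-- `L` has exponential antichain growth if some subset of `L` is an antichain family
with exponential growth. -/
def ExpAntichainGrowth {α : Type*} (r : α → α → Prop) (L : Set (List α)) : Prop :=
  ∃ L' ⊆ L, AntichainFamily r L' ∧ ExpGrowth L'

/-- `L` has polynomial antichain growth if every antichain family contained in `L`
has polynomial growth. -/
def PolyAntichainGrowth {α : Type*} (r : α → α → Prop) (L : Set (List α)) : Prop :=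
  ∀ L' ⊆ L, AntichainFamily r L' → PolyGrowth L'

/-- The Kleene star of a language: all finite concatenations of words of `L`. -/
def KStarLang {α : Type*} (L : Set (List α)) : Set (List α) :=
  {w | ∃ S : List (List α), (∀ u ∈ S, u ∈ L) ∧ w = S.flatten}

/-- `L_A(G) = {w | A ⇒* wAu for some u}`. -/
def cfgL {T : Type} (G : ContextFreeGrammar T) (A : G.NT) : Set (List T) :=
  {w | ∃ u : List T, G.Derives [Symbol.nonterminal A]
    (w.map Symbol.terminal ++ [Symbol.nonterminal A] ++ u.map Symbol.terminal)}

/-- `R_{A,w}(G) = {u | A ⇒* wAu}`. -/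
def cfgR {T : Type} (G : ContextFreeGrammar T) (A : G.NT) (w : List T) : Set (List T) :=
  {u | G.Derives [Symbol.nonterminal A]
    (w.map Symbol.terminal ++ [Symbol.nonterminal A] ++ u.map Symbol.terminal)}

/-- A nonterminal `A` is bireachable if `S ⇒* uAu'` for some terminal words `u, u'` and
`A ⇒* v` for some terminal word `v`. -/
def CfgBireachable {T : Type} (G : ContextFreeGrammar T) (A : G.NT) : Prop :=
  (∃ u u' : List T, G.Derives [Symbol.nonterminal G.initial]
    (u.map Symbol.terminal ++ [Symbol.nonterminal A] ++ u'.map Symbol.terminal)) ∧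
  (∃ v : List T, G.Derives [Symbol.nonterminal A] (v.map Symbol.terminal))

namespace LexAux

variable {α : Type*} {r : α → α → Prop}

lemma lexR_refl (u : List α) : LexR r u u := by
  induction u with
  | nil => exact LexR.nil []
  | cons x t ih => exact LexR.cons x ih

/-- strict domination: stays `LexR` under arbitrary extensions. -/
def DD (r : α → α → Prop) (u v : List α) : Prop :=
  ∀ a b : List α, LexR r (u ++ a) (v ++ b)

lemma lexR_eq_or_DD {u v : List α} (h : LexR r u v) (hl : u.length = v.length) :
    u = v ∨ DD r u v := by
  induction h with
  | nil w =>
    have : w = [] := by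
      cases w with
      | nil => rfl
      | cons a t => simp at hl
    subst this; exact Or.inl rfl
  | head w w' h =>
    exact Or.inr (fun a b => LexR.head _ _ h)
  | cons x h ih =>
    simp only [List.length_cons, Nat.succ.injEq] at hl
    rcases ih hl with rfl | hdd
    · exact Or.inl rfl
    · exact Or.inr (fun a b => LexR.cons x (hdd a b))

/-- `Comp2 u v`: equal, or one strictly dominates the other. -/
def Comp2 (r : α → α → Prop) (u v : List α) : Prop :=
  u = v ∨ DD r u v ∨ DD r v u

lemma comp2_refl (u : List α) : Comp2 r u u := Or.inl rfl

lemma comp2_lexComp {u v : List α} (h : Comp2 r u v) : LexComp r u v := by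
  rcases h with rfl | h | h
  · exact Or.inl (lexR_refl u)
  · have := h [] []
    simpa [LexComp] using Or.inl this
  · have := h [] []
    simpa [LexComp] using Or.inr this

lemma comp2_of_comp {u v : List α} (h : LexComp r u v) (hl : u.length = v.length) :
    Comp2 r u v := by
  rcases h with h | h
  · rcases lexR_eq_or_DD h hl with rfl | h
    · exact Or.inl rfl
    · exact Or.inr (Or.inl h)
  · rcases lexR_eq_or_DD h hl.symm with rfl | h
    · exact Or.inl rfl
    · exact Or.inr (Or.inr h)

lemma lexR_prepend (u : List α) {w w' : List α} (h : LexR r w w') :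
    LexR r (u ++ w) (u ++ w') := by
  induction u with
  | nil => exact h
  | cons a t ih => exact LexR.cons a ih

lemma comp2_append {u v x y : List α} (h : Comp2 r u v) (h2 : u = v → Comp2 r x y) :
    Comp2 r (u ++ x) (v ++ y) := by
  rcases h with rfl | h | h
  · rcases h2 rfl with rfl | h | h
    · exact Or.inl rfl
    · exact Or.inr (Or.inl (fun a b => by
        rw [List.append_assoc, List.append_assoc]; exact lexR_prepend _ (h _ _)))
    · exact Or.inr (Or.inr (fun a b => by
        rw [List.append_assoc, List.append_assoc]; exact lexR_prepend _ (h _ _)))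
  · exact Or.inr (Or.inl (fun a b => by
      rw [List.append_assoc, List.append_assoc]; exact h _ _))
  · exact Or.inr (Or.inr (fun a b => by
      rw [List.append_assoc, List.append_assoc]; exact h _ _))

lemma comp2_flatten {zs zs' : List (List α)}
    (h : List.Forall₂ (Comp2 r) zs zs') : Comp2 r zs.flatten zs'.flatten := by
  induction h with
  | nil => exact comp2_refl _
  | cons h _ ih =>
    simp only [List.flatten_cons]
    exact comp2_append h (fun _ => ih)

end LexAux


namespace LexAux

/-- Skeleton profiles: a tree of pump blocks. -/
inductive Prof (T : Type) (N : Type*) : Type _ where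
  | node : N → ℕ → ℕ → List (T ⊕ Prof T N) → Prof T N

variable {T : Type} {G : ContextFreeGrammar T}

/-- `Fits G p w`: the word `w` matches the profile `p`. -/
inductive Fits (G : ContextFreeGrammar T) : Prof T G.NT → List T → Prop where
  | mk {B : G.NT} {pl ql : ℕ} {cs : List (T ⊕ Prof T G.NT)} {P Q : List T}
      {zs : List (List T)}
      (hP : P.length = pl) (hQ : Q.length = ql)
      (hPL : P ∈ cfgL G B) (hQR : Q ∈ cfgR G B P)
      (hlen : cs.length = zs.length)
      (hzs1 : ∀ i (hi : i < cs.length) (hz : i < zs.length),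
        ∀ t, cs.get ⟨i, hi⟩ = Sum.inl t → zs.get ⟨i, hz⟩ = [t])
      (hzs2 : ∀ i (hi : i < cs.length) (hz : i < zs.length),
        ∀ p, cs.get ⟨i, hi⟩ = Sum.inr p → Fits G p (zs.get ⟨i, hz⟩)) :
      Fits G (.node B pl ql cs) (P ++ zs.flatten ++ Q)

variable [PartialOrder T]

theorem fits_comp2
    (hL : ∀ A : G.NT, IsChainLang (· < ·) (cfgL G A))
    (hR : ∀ A : G.NT, ∀ w : List T, IsChainLang (· < ·) (cfgR G A w)) :
    ∀ (n : ℕ) (p : Prof T G.NT), sizeOf p ≤ n →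
      ∀ w w', Fits G p w → Fits G p w' → Comp2 (· < ·) w w' := by
  intro n
  induction n with
  | zero => intro p hp; cases p with
    | node B pl ql cs => simp at hp
  | succ n ih =>
    intro p hp w w' hw hw'
    cases hw with
    | @mk B pl ql cs P Q zs hP hQ hPL hQR hlen hzs1 hzs2 =>
      cases hw' with
      | @mk _ _ _ _ P' Q' zs' hP' hQ' hPL' hQR' hlen' hzs1' hzs2' =>
        rw [List.append_assoc, List.append_assoc]
        have hPP : Comp2 (· < ·) P P' :=
          comp2_of_comp (hL B P hPL P' hPL') (by rw [hP, hP'])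
        refine comp2_append hPP (fun hPeq => ?_)
        subst hPeq
        have hQQ : Comp2 (· < ·) Q Q' :=
          comp2_of_comp (hR B P Q hQR Q' hQR') (by rw [hQ, hQ'])
        refine comp2_append ?_ (fun _ => hQQ)
        apply comp2_flatten
        rw [List.forall₂_iff_get]
        refine ⟨by omega, fun i h1 h2 => ?_⟩
        have hic : i < cs.length := by omega
        rcases hcs : cs.get ⟨i, hic⟩ with t | pc
        · rw [hzs1 i hic h1 t hcs, hzs1' i hic h2 t hcs]
          exact comp2_refl _
        · have hsz : sizeOf pc ≤ n := by
            have hmem : (Sum.inr pc : T ⊕ Prof T G.NT) ∈ cs := by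
              rw [← hcs]; exact List.get_mem _ _
            have hlt := List.sizeOf_lt_of_mem hmem
            simp only [Prof.node.sizeOf_spec] at hp
            simp only [Sum.inr.sizeOf_spec] at hlt
            omega
          exact ih pc (by omega) _ _
            (hzs2 i hic h1 pc hcs) (hzs2' i hic h2 pc hcs)

end LexAux


namespace LexAux

open ContextFreeGrammar

variable {T : Type} {G : ContextFreeGrammar T}

/-- `n`-step derivations. -/
def DerivesIn (G : ContextFreeGrammar T) :
    ℕ → List (Symbol T G.NT) → List (Symbol T G.NT) → Prop
  | 0, u, v => u = v
  | n + 1, u, v => ∃ w, G.Produces u w ∧ DerivesIn G n w v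

lemma derivesIn_zero_iff {u v : List (Symbol T G.NT)} : DerivesIn G 0 u v ↔ u = v := Iff.rfl

lemma derivesIn_succ_iff {n : ℕ} {u v : List (Symbol T G.NT)} :
    DerivesIn G (n + 1) u v ↔ ∃ w, G.Produces u w ∧ DerivesIn G n w v := Iff.rfl

lemma derivesIn_trans : ∀ {m n : ℕ} {u v w : List (Symbol T G.NT)},
    DerivesIn G m u v → DerivesIn G n v w → DerivesIn G (m + n) u w := by
  intro m
  induction m with
  | zero => intro n u v w h1 h2; cases h1; simpa using h2
  | succ m ih =>
    intro n u v w h1 h2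
    obtain ⟨x, hx, h1'⟩ := h1
    have key : DerivesIn G (m + n + 1) u w := derivesIn_succ_iff.2 ⟨x, hx, ih h1' h2⟩
    have heq : m + 1 + n = m + n + 1 := by omega
    rw [heq]; exact key

lemma derivesIn_tail {n : ℕ} {u v w : List (Symbol T G.NT)}
    (h : DerivesIn G n u v) (h2 : G.Produces v w) : DerivesIn G (n + 1) u w :=
  derivesIn_trans h (derivesIn_succ_iff.2 ⟨w, h2, rfl⟩)

lemma derives_iff_derivesIn {u v : List (Symbol T G.NT)} :
    G.Derives u v ↔ ∃ n, DerivesIn G n u v := by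
  constructor
  · intro h
    induction h with
    | refl => exact ⟨0, rfl⟩
    | tail _ hstep ih => obtain ⟨n, hn⟩ := ih; exact ⟨n + 1, derivesIn_tail hn hstep⟩
  · rintro ⟨n, hn⟩
    induction n generalizing u with
    | zero => cases hn; rfl
    | succ n ih =>
      obtain ⟨w, hw, h'⟩ := hn
      exact hw.trans_derives (ih h')

lemma DerivesIn.toDerives {n : ℕ} {u v : List (Symbol T G.NT)} (h : DerivesIn G n u v) :
    G.Derives u v :=
  derives_iff_derivesIn.2 ⟨n, h⟩

/-- A one-step rewrite of a concatenation happens in one of the two parts. -/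
lemma produces_append_split {u v x : List (Symbol T G.NT)}
    (h : G.Produces (u ++ v) x) :
    (∃ u', G.Produces u u' ∧ x = u' ++ v) ∨ (∃ v', G.Produces v v' ∧ x = u ++ v') := by
  obtain ⟨r, hr, hrw⟩ := h
  rw [ContextFreeRule.rewrites_iff] at hrw
  obtain ⟨p, q, huv, hx⟩ := hrw
  rw [List.append_assoc] at huv
  rcases List.append_eq_append_iff.mp huv with ⟨a, ha, hv⟩ | ⟨c, hu, hrest⟩
  · right
    refine ⟨a ++ r.output ++ q, ⟨r, hr, ?_⟩, ?_⟩
    · rw [ContextFreeRule.rewrites_iff]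
      exact ⟨a, q, by rw [hv, List.append_assoc], rfl⟩
    · rw [hx, ha]; simp [List.append_assoc]
  · cases c with
    | nil =>
      right
      simp only [List.nil_append] at hrest
      refine ⟨r.output ++ q, ⟨r, hr, ?_⟩, ?_⟩
      · rw [ContextFreeRule.rewrites_iff]
        exact ⟨[], q, by rw [← hrest]; simp, by simp⟩
      · rw [hx, hu]; simp [List.append_assoc]
    | cons s c' =>
      left
      have hrest' : Symbol.nonterminal r.input = s ∧ q = c' ++ v := by
        simp only [List.cons_append, List.singleton_append, List.cons_eq_cons] at hrest
        exact ⟨hrest.1, hrest.2⟩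
      obtain ⟨hs1, rfl⟩ := hrest'
      refine ⟨p ++ r.output ++ c', ⟨r, hr, ?_⟩, ?_⟩
      · rw [ContextFreeRule.rewrites_iff]
        exact ⟨p, c', by rw [hu, ← hs1]; simp, rfl⟩
      · rw [hx]; simp [List.append_assoc]

lemma derivesIn_append_split : ∀ {n : ℕ} {u v w : List (Symbol T G.NT)},
    DerivesIn G n (u ++ v) w →
    ∃ u' v' n1 n2, w = u' ++ v' ∧ n1 + n2 = n ∧ DerivesIn G n1 u u' ∧ DerivesIn G n2 v v' := by
  intro n
  induction n with
  | zero =>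
    intro u v w h
    cases h
    exact ⟨u, v, 0, 0, rfl, rfl, rfl, rfl⟩
  | succ n ih =>
    intro u v w h
    obtain ⟨x, hx, h'⟩ := h
    rcases produces_append_split hx with ⟨u', hu', rfl⟩ | ⟨v', hv', rfl⟩
    · obtain ⟨a, b, n1, n2, rfl, hn, h1, h2⟩ := ih h'
      exact ⟨a, b, n1 + 1, n2, rfl, by omega, derivesIn_succ_iff.2 ⟨u', hu', h1⟩, h2⟩
    · obtain ⟨a, b, n1, n2, rfl, hn, h1, h2⟩ := ih h'
      exact ⟨a, b, n1, n2 + 1, rfl, by omega, h1, derivesIn_succ_iff.2 ⟨v', hv', h2⟩⟩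

lemma derivesIn_nil : ∀ {n : ℕ} {w : List (Symbol T G.NT)}, DerivesIn G n [] w → w = [] := by
  intro n
  induction n with
  | zero => intro w h; exact h.symm
  | succ n ih =>
    intro w h
    obtain ⟨x, ⟨r, _, hrw⟩, _⟩ := h
    rw [ContextFreeRule.rewrites_iff] at hrw
    obtain ⟨p, q, hpq, _⟩ := hrw
    exact absurd hpq.symm (by simp)

lemma derivesIn_terminal {n : ℕ} {t : T} {w : List (Symbol T G.NT)}
    (h : DerivesIn G n [Symbol.terminal t] w) : w = [Symbol.terminal t] := by
  cases n with
  | zero => exact h.symm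
  | succ n =>
    obtain ⟨x, ⟨r, _, hrw⟩, _⟩ := h
    rw [ContextFreeRule.rewrites_iff] at hrw
    obtain ⟨p, q, hpq, _⟩ := hrw
    exfalso
    cases p with
    | nil => simp at hpq
    | cons a p' => cases p' <;> simp_all

lemma derivesIn_nt_head {n : ℕ} {A : G.NT} {w : List (Symbol T G.NT)}
    (h : DerivesIn G (n + 1) [Symbol.nonterminal A] w) :
    ∃ r ∈ G.rules, r.input = A ∧ DerivesIn G n r.output w := by
  obtain ⟨x, ⟨r, hr, hrw⟩, h'⟩ := h
  rw [ContextFreeRule.rewrites_iff] at hrw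
  obtain ⟨p, q, hpq, hx⟩ := hrw
  have hp : p = [] ∧ q = [] ∧ r.input = A := by
    cases p with
    | nil =>
      simp only [List.nil_append] at hpq
      cases q with
      | nil => refine ⟨rfl, rfl, ?_⟩; simpa using hpq.symm
      | cons b q' => simp at hpq
    | cons a p' => cases p' <;> simp_all
  obtain ⟨rfl, rfl, hinp⟩ := hp
  refine ⟨r, hr, hinp, ?_⟩
  rw [hx] at h'; simpa using h'

end LexAux


namespace LexAux

open ContextFreeGrammar

/-- Derivation trees. -/
inductive DT (T : Type) (N : Type uN) : Type uN where
  | node : ContextFreeRule T N → List (T ⊕ DT T N) → DT T N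

variable {T : Type} {N : Type uN}

def DT.rule : DT T N → ContextFreeRule T N
  | .node r _ => r

def DT.label (t : DT T N) : N := t.rule.input

def DT.children : DT T N → List (T ⊕ DT T N)
  | .node _ cs => cs

def symOf : (T ⊕ DT T N) → Symbol T N
  | .inl t => Symbol.terminal t
  | .inr p => Symbol.nonterminal p.label

mutual
def DT.yield : DT T N → List T
  | .node _ cs => yieldList cs
def yieldList : List (T ⊕ DT T N) → List T
  | [] => []
  | .inl t :: cs => t :: yieldList cs
  | .inr p :: cs => p.yield ++ yieldList cs
end

lemma yieldList_append (xs ys : List (T ⊕ DT T N)) :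
    yieldList (xs ++ ys) = yieldList xs ++ yieldList ys := by
  induction xs with
  | nil => simp [yieldList]
  | cons c cs ih => cases c <;> simp [yieldList, ih]

variable {G : ContextFreeGrammar T}

/-- Well-formed derivation trees. -/
inductive WFt (G : ContextFreeGrammar T) : DT T G.NT → Prop where
  | node {r : ContextFreeRule T G.NT} {cs : List (T ⊕ DT T G.NT)}
      (hr : r ∈ G.rules) (hout : r.output = cs.map symOf)
      (hch : ∀ p, Sum.inr p ∈ cs → WFt G p) : WFt G (.node r cs)

lemma listDerives {cs : List (T ⊕ DT T G.NT)}
    (h : ∀ p, Sum.inr p ∈ cs →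
      G.Derives [Symbol.nonterminal (DT.label p)] ((DT.yield p).map Symbol.terminal)) :
    G.Derives (cs.map symOf) ((yieldList cs).map Symbol.terminal) := by
  induction cs with
  | nil => simp only [yieldList, List.map_nil]; exact Derives.refl _
  | cons c cs ih =>
    have ih' := ih (fun p hp => h p (List.mem_cons_of_mem _ hp))
    cases c with
    | inl t =>
      simpa [yieldList, symOf] using ih'.append_left [Symbol.terminal t]
    | inr p =>
      have h1 : G.Derives [Symbol.nonterminal p.label] ((DT.yield p).map Symbol.terminal) :=
        h p (List.mem_cons_self)
      have h2 : G.Derives ([Symbol.nonterminal p.label] ++ cs.map symOf)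
          ((DT.yield p).map Symbol.terminal ++ (yieldList cs).map Symbol.terminal) :=
        Derives.trans (h1.append_right _) (ih'.append_left _)
      simpa [yieldList, symOf] using h2

lemma wf_derives : ∀ (n : ℕ) (t : DT T G.NT), sizeOf t ≤ n → WFt G t →
    G.Derives [Symbol.nonterminal t.label] ((DT.yield t).map Symbol.terminal) := by
  intro n
  induction n with
  | zero => intro t h; cases t with | node r cs => simp at h
  | succ n ih =>
    rintro ⟨r, cs⟩ hsz hw
    cases hw with
    | node hr hout hch =>
      have step : G.Derives [Symbol.nonterminal r.input] r.output :=
        Produces.single ⟨r, hr, ContextFreeRule.Rewrites.input_output⟩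
      have rest : G.Derives (cs.map symOf) ((yieldList cs).map Symbol.terminal) := by
        apply listDerives
        intro p hp
        have : sizeOf p ≤ n := by
          have hlt := List.sizeOf_lt_of_mem hp
          simp only [Sum.inr.sizeOf_spec] at hlt
          simp only [DT.node.sizeOf_spec] at hsz
          omega
        exact ih p this (hch p hp)
      exact (step.trans (hout ▸ rest))

lemma map_terminal_ne_nt {A : G.NT} {w : List T} :
    (w.map Symbol.terminal : List (Symbol T G.NT)) ≠ [Symbol.nonterminal A] := by
  cases w with
  | nil => simp
  | cons a w' => cases w' <;> simp

/-- Completeness: every terminal derivation has a derivation tree. -/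
theorem derivesIn_tree : ∀ (n : ℕ) (A : G.NT) (w : List T),
    DerivesIn G n [Symbol.nonterminal A] (w.map Symbol.terminal) →
    ∃ t : DT T G.NT, WFt G t ∧ t.label = A ∧ t.yield = w := by
  intro n
  induction n using Nat.strong_induction_on with
  | _ n IH =>
    intro A w h
    cases n with
    | zero =>
      exfalso
      exact map_terminal_ne_nt (derivesIn_zero_iff.1 h).symm
    | succ m =>
      obtain ⟨r, hr, hinp, hder⟩ := derivesIn_nt_head h
      -- helper: process the list r.output
      suffices hsuf : ∀ (out : List (Symbol T G.NT)) (w : List T) (k : ℕ), k ≤ m →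
          DerivesIn G k out (w.map Symbol.terminal) →
          ∃ cs, out = cs.map symOf ∧ yieldList cs = w ∧ ∀ p, Sum.inr p ∈ cs → WFt G p by
        obtain ⟨cs, hout, hy, hch⟩ := hsuf r.output w m le_rfl hder
        exact ⟨.node r cs, WFt.node hr hout hch, hinp, hy⟩
      intro out
      induction out with
      | nil =>
        intro w k _ h
        have : (w.map Symbol.terminal : List (Symbol T G.NT)) = [] := derivesIn_nil h
        have hw : w = [] := by simpa using this
        exact ⟨[], rfl, by simp [hw, yieldList], by simp⟩
      | cons s out' ihout =>
        intro w k hk h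
        have h' : DerivesIn G k ([s] ++ out') (w.map Symbol.terminal) := by simpa using h
        obtain ⟨u', v', k1, k2, huv, hks, h1, h2⟩ := derivesIn_append_split h'
        obtain ⟨w1, w2, rfl, hw1, hw2⟩ := List.map_eq_append_iff.mp huv
        cases s with
        | terminal t =>
          have : u' = [Symbol.terminal t] := derivesIn_terminal h1
          have hw1' : w1 = [t] := by
            subst this
            cases w1 with
            | nil => simp at hw1
            | cons a w1' => cases w1' <;> simp_all
          obtain ⟨cs, ho, hy, hch⟩ := ihout w2 k2 (by omega) (hw2 ▸ h2)
          refine ⟨.inl t :: cs, by simp [symOf, ho], by simp [yieldList, hy, hw1'], ?_⟩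
          intro p hp
          rcases List.mem_cons.mp hp with h | h
          · simp at h
          · exact hch p h
        | nonterminal B =>
          obtain ⟨tB, hwf, hlab, hyield⟩ := IH k1 (by omega) B w1 (hw1 ▸ h1)
          obtain ⟨cs, ho, hy, hch⟩ := ihout w2 k2 (by omega) (hw2 ▸ h2)
          refine ⟨.inr tB :: cs, by simp [symOf, ho, hlab], by simp [yieldList, hy, hyield], ?_⟩
          intro p hp
          rcases List.mem_cons.mp hp with h | h
          · rw [Sum.inr.inj h]; exact hwf
          · exact hch p h

end LexAux


namespace LexAux

open ContextFreeGrammar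

variable {T : Type} {N : Type uN}

/-- Proper subtree relation. -/
inductive PSub : DT T N → DT T N → Prop where
  | child {p : DT T N} {r cs} (h : Sum.inr p ∈ cs) : PSub p (.node r cs)
  | deeper {p c : DT T N} {r cs} (h : Sum.inr c ∈ cs) (hp : PSub p c) : PSub p (.node r cs)

lemma psub_sizeOf {p t : DT T N} (h : PSub p t) : sizeOf p < sizeOf t := by
  induction h with
  | @child r cs h =>
    have hlt := List.sizeOf_lt_of_mem h
    simp only [Sum.inr.sizeOf_spec] at hlt
    simp only [DT.node.sizeOf_spec]
    omega
  | @deeper c r cs h _ ih =>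
    have hlt := List.sizeOf_lt_of_mem h
    simp only [Sum.inr.sizeOf_spec] at hlt
    simp only [DT.node.sizeOf_spec]
    omega

lemma psub_trans {a b c : DT T N} (h1 : PSub a b) (h2 : PSub b c) : PSub a c := by
  induction h2 with
  | child h => exact PSub.deeper h h1
  | deeper h _ ih => exact PSub.deeper h ih

variable {G : ContextFreeGrammar T}

lemma WFt.derives {t : DT T G.NT} (h : WFt G t) :
    G.Derives [Symbol.nonterminal t.label] ((DT.yield t).map Symbol.terminal) :=
  wf_derives (sizeOf t) t le_rfl h

lemma WFt.child {r : ContextFreeRule T G.NT} {cs} {c : DT T G.NT}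
    (h : WFt G (.node r cs)) (hc : Sum.inr c ∈ cs) : WFt G c := by
  cases h with | node hr hout hch => exact hch c hc

lemma derives_middle {A0 A1 C0 C1 M : List (Symbol T G.NT)}
    (d1 : G.Derives A0 A1) (d2 : G.Derives C0 C1) :
    G.Derives (A0 ++ M ++ C0) (A1 ++ M ++ C1) := by
  have h1 : G.Derives (A0 ++ (M ++ C0)) (A1 ++ (M ++ C0)) := d1.append_right _
  have h2 : G.Derives ((A1 ++ M) ++ C0) ((A1 ++ M) ++ C1) := d2.append_left _
  rw [List.append_assoc, List.append_assoc]
  exact h1.trans (by simpa [List.append_assoc] using h2)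

lemma derives_replace {X Y Z : List (Symbol T G.NT)} {A B : G.NT}
    (h1 : G.Derives [Symbol.nonterminal A] (X ++ [Symbol.nonterminal B] ++ Y))
    (h2 : G.Derives [Symbol.nonterminal B] Z) :
    G.Derives [Symbol.nonterminal A] (X ++ Z ++ Y) := by
  refine h1.trans ?_
  have h3 := (h2.append_right Y).append_left X
  rw [List.append_assoc, List.append_assoc]
  exact by simpa [List.append_assoc] using h3

lemma psub_child_decomp {r : ContextFreeRule T G.NT} {cs} {c : DT T G.NT}
    (hw : WFt G (.node r cs)) (hc : Sum.inr c ∈ cs) :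
    ∃ l rr : List T, (DT.node r cs).yield = l ++ c.yield ++ rr ∧
      G.Derives [Symbol.nonterminal (DT.node r cs).label]
        (l.map Symbol.terminal ++ [Symbol.nonterminal c.label] ++ rr.map Symbol.terminal) := by
  cases hw with
  | node hr hout hch =>
    obtain ⟨cs1, cs2, rfl⟩ := List.append_of_mem hc
    refine ⟨yieldList cs1, yieldList cs2, ?_, ?_⟩
    · show yieldList _ = _
      rw [yieldList_append]
      simp [yieldList]
    · have step : G.Derives [Symbol.nonterminal r.input] r.output :=
        Produces.single ⟨r, hr, ContextFreeRule.Rewrites.input_output⟩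
      have d1 : G.Derives (cs1.map symOf) ((yieldList cs1).map Symbol.terminal) :=
        listDerives (fun p hp => (hch p (by simp [hp])).derives)
      have d2 : G.Derives (cs2.map symOf) ((yieldList cs2).map Symbol.terminal) :=
        listDerives (fun p hp => (hch p (by simp [hp])).derives)
      have hout' : r.output = cs1.map symOf ++ [Symbol.nonterminal c.label] ++ cs2.map symOf := by
        rw [hout]; simp [symOf]
      show G.Derives [Symbol.nonterminal r.input] _
      rw [hout'] at step
      exact step.trans (derives_middle d1 d2)

theorem psub_decomp {t t' : DT T G.NT} (hs : PSub t' t) (hw : WFt G t) :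
    WFt G t' ∧ ∃ l rr : List T, t.yield = l ++ t'.yield ++ rr ∧
      G.Derives [Symbol.nonterminal t.label]
        (l.map Symbol.terminal ++ [Symbol.nonterminal t'.label] ++ rr.map Symbol.terminal) := by
  induction hs with
  | @child r cs h =>
    exact ⟨hw.child h, psub_child_decomp hw h⟩
  | @deeper c r cs h hp ih =>
    have hwc : WFt G c := hw.child h
    obtain ⟨hwp, l2, r2, hy2, hd2⟩ := ih hwc
    obtain ⟨l1, r1, hy1, hd1⟩ := psub_child_decomp hw h
    refine ⟨hwp, l1 ++ l2, r2 ++ r1, ?_, ?_⟩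
    · rw [hy1, hy2]; simp [List.append_assoc]
    · have := derives_replace hd1 hd2
      rw [List.map_append, List.map_append]
      simpa [List.append_assoc] using this

end LexAux


namespace LexAux

open ContextFreeGrammar

variable {T : Type} {N : Type uN}

def Prof.rootNT : Prof T N → N
  | .node B _ _ _ => B

/-- Bounded-shape profiles: depth ≤ d, width ≤ b, nonterminals in F. -/
inductive ProfOK (b : ℕ) (F : Finset N) : ℕ → Prof T N → Prop where
  | mk {B : N} {pl ql : ℕ} {cs : List (T ⊕ Prof T N)} {d : ℕ}
      (hB : B ∈ F) (hlen : cs.length ≤ b)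
      (hch : ∀ p, Sum.inr p ∈ cs → ProfOK b F d p) : ProfOK b F (d + 1) (.node B pl ql cs)

lemma profOK_congr {b : ℕ} {F : Finset N} {d : ℕ} {B : N} {pl ql pl' ql' : ℕ}
    {cs : List (T ⊕ Prof T N)} (h : ProfOK b F d (.node B pl ql cs)) :
    ProfOK b F d (.node B pl' ql' cs) := by
  cases h with
  | mk hB hlen hch => exact ProfOK.mk hB hlen hch

variable {G : ContextFreeGrammar T}

def FitC (G : ContextFreeGrammar T) : (T ⊕ Prof T G.NT) → List T → Prop
  | .inl t, z => z = [t]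
  | .inr p, z => Fits G p z

lemma fits_node_iff {B : G.NT} {pl ql : ℕ} {cs : List (T ⊕ Prof T G.NT)} {w : List T} :
    Fits G (.node B pl ql cs) w ↔ ∃ P Q zs, w = P ++ zs.flatten ++ Q ∧ P.length = pl ∧
      Q.length = ql ∧ P ∈ cfgL G B ∧ Q ∈ cfgR G B P ∧ List.Forall₂ (FitC G) cs zs := by
  constructor
  · intro h
    cases h with
    | mk hP hQ hPL hQR hlen hzs1 hzs2 =>
      refine ⟨_, _, _, rfl, hP, hQ, hPL, hQR, ?_⟩
      rw [List.forall₂_iff_get]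
      refine ⟨hlen, fun i h1 h2 => ?_⟩
      rcases hc : cs.get ⟨i, h1⟩ with t | p
      · simp only [hc, FitC]
        exact hzs1 i h1 h2 t hc
      · simp only [hc, FitC]
        exact hzs2 i h1 h2 p hc
  · rintro ⟨P, Q, zs, rfl, hP, hQ, hPL, hQR, hf⟩
    rw [List.forall₂_iff_get] at hf
    refine Fits.mk hP hQ hPL hQR hf.1 ?_ ?_
    · intro i h1 h2 t ht
      have := hf.2 i h1 h2
      rw [ht] at this
      exact this
    · intro i h1 h2 p hp
      have := hf.2 i h1 h2
      rw [hp] at this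
      exact this

/-- `t` avoids the forbidden set `S`. -/
def AvoidS (S : Finset N) (t : DT T N) : Prop :=
  t.label ∉ S ∧ ∀ t', PSub t' t → t'.label ∉ S

theorem tree_profile [DecidableEq G.NT] {b : ℕ} {F : Finset G.NT}
    (hb : ∀ r ∈ G.rules, r.output.length ≤ b)
    (hF : ∀ r ∈ G.rules, r.input ∈ F) :
    ∀ (n : ℕ) (t : DT T G.NT) (S : Finset G.NT), sizeOf t ≤ n → WFt G t → AvoidS S t →
    ∃ p : Prof T G.NT, Fits G p t.yield ∧ ProfOK b F ((F \ S).card) p ∧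
      p.rootNT = t.label := by
  intro n
  induction n with
  | zero =>
    rintro ⟨r, cs⟩ S h
    simp only [DT.node.sizeOf_spec] at h
    omega
  | succ n ih =>
    rintro ⟨r, cs⟩ S hsz hw hav
    have hlabel : (DT.node r cs).label = r.input := rfl
    by_cases hA : ∃ t', PSub t' (DT.node r cs) ∧ t'.label = r.input
    · -- pump extraction on a proper subtree with the same label
      obtain ⟨t', hps, hlab⟩ := hA
      obtain ⟨hw', l, rr, hy, hd⟩ := psub_decomp hps hw
      have hsz' : sizeOf t' ≤ n := by
        have h2 := psub_sizeOf hps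
        omega
      have hav' : AvoidS S t' := ⟨by rw [hlab]; exact hav.1,
        fun u hu => hav.2 u (psub_trans hu hps)⟩
      obtain ⟨p, hfit, hok, hroot⟩ := ih t' S hsz' hw' hav'
      obtain ⟨B, pl, ql, pcs⟩ := p
      have hB : B = r.input := by
        have : Prof.rootNT (.node B pl ql pcs) = B := rfl
        rw [this] at hroot
        rw [hroot, hlab]
      subst hB
      rw [fits_node_iff] at hfit
      obtain ⟨P, Q, zs, hyp, hPl, hQl, hPL, hQR, hf⟩ := hfit
      rw [hlab] at hd
      have key : G.Derives [Symbol.nonterminal r.input]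
          ((l ++ P).map Symbol.terminal ++ [Symbol.nonterminal r.input]
            ++ ((Q ++ rr).map Symbol.terminal)) := by
        have hin : G.Derives [Symbol.nonterminal r.input]
            (P.map Symbol.terminal ++ [Symbol.nonterminal r.input]
              ++ Q.map Symbol.terminal) := hQR
        have := derives_replace hd hin
        rw [List.map_append, List.map_append]
        simpa [List.append_assoc, hlabel] using this
      refine ⟨.node r.input (l.length + pl) (ql + rr.length) pcs, ?_, profOK_congr hok, rfl⟩
      rw [fits_node_iff]
      refine ⟨l ++ P, Q ++ rr, zs, ?_, by simp [hPl], by simp [hQl], ⟨Q ++ rr, key⟩, key, hf⟩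
      rw [hy, hyp]
      simp [List.append_assoc]
    · -- no repetition of the root label: recurse into children
      cases hw with
      | node hr hout hch =>
        have hlist : ∀ cs' : List (T ⊕ DT T G.NT), (∀ c ∈ cs', c ∈ cs) →
            ∃ (pcs : List (T ⊕ Prof T G.NT)) (zs : List (List T)),
              List.Forall₂ (FitC G) pcs zs ∧ zs.flatten = yieldList cs' ∧
              pcs.length = cs'.length ∧
              ∀ p, Sum.inr p ∈ pcs → ProfOK b F ((F \ insert r.input S).card) p := by
          intro cs'
          induction cs' with
          | nil => exact fun _ => ⟨[], [], List.Forall₂.nil, rfl, rfl, by simp⟩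
          | cons c cs'' ihl =>
            intro hsub
            obtain ⟨pcs, zs, hf, hfl, hpl, hpok⟩ :=
              ihl (fun c hc => hsub c (List.mem_cons_of_mem _ hc))
            cases c with
            | inl t =>
              refine ⟨.inl t :: pcs, [t] :: zs, List.Forall₂.cons rfl hf, ?_, by simp [hpl], ?_⟩
              · simp [yieldList, hfl]
              · intro p hp
                rcases List.mem_cons.mp hp with h | h
                · simp at h
                · exact hpok p h
            | inr q =>
              have hq : Sum.inr q ∈ cs := hsub _ (List.mem_cons_self)
              have hwq : WFt G q := hch q hq
              have havq : AvoidS (insert r.input S) q := by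
                constructor
                · intro hmem
                  rcases Finset.mem_insert.mp hmem with h | h
                  · exact hA ⟨q, PSub.child hq, h⟩
                  · exact hav.2 q (PSub.child hq) h
                · intro u hu hmem
                  rcases Finset.mem_insert.mp hmem with h | h
                  · exact hA ⟨u, PSub.deeper hq hu, h⟩
                  · exact hav.2 u (PSub.deeper hq hu) h
              have hszq : sizeOf q ≤ n := by
                have hlt := List.sizeOf_lt_of_mem hq
                simp only [Sum.inr.sizeOf_spec] at hlt
                simp only [DT.node.sizeOf_spec] at hsz
                omega
              obtain ⟨pq, hfitq, hokq, _⟩ := ih q (insert r.input S) hszq hwq havq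
              refine ⟨.inr pq :: pcs, q.yield :: zs, List.Forall₂.cons hfitq hf, ?_,
                by simp [hpl], ?_⟩
              · simp [yieldList, hfl]
              · intro p hp
                rcases List.mem_cons.mp hp with h | h
                · rw [Sum.inr.inj h]; exact hokq
                · exact hpok p h
        obtain ⟨pcs, zs, hf, hfl, hpl, hpok⟩ := hlist cs (fun _ h => h)
        have hcard : (F \ S).card = (F \ insert r.input S).card + 1 := by
          have hAF : r.input ∈ F := hF r hr
          have hAS : r.input ∉ S := hav.1
          have hmem : r.input ∈ F \ S := Finset.mem_sdiff.2 ⟨hAF, hAS⟩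
          have h1 : F \ insert r.input S = (F \ S).erase r.input := by
            ext x
            simp only [Finset.mem_sdiff, Finset.mem_insert, Finset.mem_erase]
            tauto
          rw [h1, Finset.card_erase_of_mem hmem]
          have := Finset.card_pos.mpr ⟨r.input, hmem⟩
          omega
        refine ⟨.node r.input 0 0 pcs, ?_, ?_, rfl⟩
        · rw [fits_node_iff]
          refine ⟨[], [], zs, ?_, rfl, rfl, ⟨[], by simpa using Derives.refl _⟩,
            by simpa [cfgR] using Derives.refl ([Symbol.nonterminal r.input]), hf⟩
          show yieldList cs = _
          simp [hfl]
        · rw [hcard]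
          refine ProfOK.mk (hF r hr) ?_ hpok
          have h1 : r.output.length = cs.length := by rw [hout]; simp
          have h2 := hb r hr
          omega

end LexAux


namespace LexAux

variable {T : Type} {N : Type uN}

/-- All numeric annotations in the profile are `≤ n`. -/
inductive NumLE (n : ℕ) : Prof T N → Prop where
  | mk {B : N} {pl ql : ℕ} {cs : List (T ⊕ Prof T N)}
      (hpl : pl ≤ n) (hql : ql ≤ n)
      (hch : ∀ p, Sum.inr p ∈ cs → NumLE n p) : NumLE n (.node B pl ql cs)

lemma numLE_mono {n n' : ℕ} {p : Prof T N} (h : NumLE n p) (hn : n ≤ n') : NumLE n' p := by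
  induction h with
  | mk hpl hql hch ih => exact NumLE.mk (hpl.trans hn) (hql.trans hn) ih

variable {G : ContextFreeGrammar T}

lemma fits_numLE : ∀ (m : ℕ) (p : Prof T G.NT) (w : List T), sizeOf p ≤ m →
    Fits G p w → NumLE w.length p := by
  intro m
  induction m with
  | zero =>
    rintro ⟨B, pl, ql, cs⟩ w h
    simp only [Prof.node.sizeOf_spec] at h
    omega
  | succ m ih =>
    rintro ⟨B, pl, ql, cs⟩ w hsz hfit
    rw [fits_node_iff] at hfit
    obtain ⟨P, Q, zs, rfl, hPl, hQl, _, _, hf⟩ := hfit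
    refine NumLE.mk (by simp only [List.length_append]; omega) (by simp only [List.length_append]; omega) ?_
    intro p hp
    obtain ⟨⟨i, hi⟩, hget⟩ := List.mem_iff_get.mp hp
    rw [List.forall₂_iff_get] at hf
    obtain ⟨hlen, hfi⟩ := hf
    have hz : i < zs.length := by omega
    have hfit' : Fits G p (zs.get ⟨i, hz⟩) := by
      have := hfi i hi hz
      rw [hget] at this
      exact this
    have hszp : sizeOf p ≤ m := by
      have hlt := List.sizeOf_lt_of_mem (hget ▸ List.get_mem _ _)
      simp only [Sum.inr.sizeOf_spec, Prof.node.sizeOf_spec] at hlt hsz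
      omega
    have h1 : NumLE (zs.get ⟨i, hz⟩).length p := ih p _ hszp hfit'
    refine numLE_mono h1 ?_
    have hmem : zs.get ⟨i, hz⟩ ∈ zs := List.get_mem _ _
    have : (zs.get ⟨i, hz⟩).length ≤ zs.flatten.length := by
      rw [List.length_flatten]
      exact List.le_sum_of_mem (List.mem_map_of_mem hmem)
    simp only [List.length_append]
    omega

end LexAux


namespace LexAux

variable {N : Type uN}

/-- Encoding space for bounded profiles (a `Type 0` family). -/
def Enc (T : Type) (cF b n : ℕ) : ℕ → Type
  | 0 => Empty
  | d + 1 => Fin cF × Fin (n + 1) × Fin (n + 1) × (Fin b → Option (T ⊕ Enc T cF b n d))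

instance encFintype (T : Type) [Fintype T] (cF b n : ℕ) :
    ∀ d, Fintype (Enc T cF b n d)
  | 0 => by unfold Enc; infer_instance
  | d + 1 => by
      unfold Enc
      haveI := encFintype T cF b n d
      infer_instance

variable {T : Type}

mutual
def encodeO (eF : N → Fin cF) (b n : ℕ) :
    (d : ℕ) → Prof T N → Option (Enc T cF b n d)
  | 0, _ => none
  | d + 1, .node B pl ql cs =>
    if h : pl < n + 1 ∧ ql < n + 1 then
      some ⟨eF B, ⟨pl, h.1⟩, ⟨ql, h.2⟩, fun i => slotOf eF b n d (cs[i.1]?)⟩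
    else none

def slotOf (eF : N → Fin cF) (b n : ℕ) :
    (d : ℕ) → Option (T ⊕ Prof T N) → Option (T ⊕ Enc T cF b n d)
  | _, none => none
  | _, some (.inl t) => some (.inl t)
  | d, some (.inr p') => (encodeO eF b n d p').map Sum.inr
end

variable {F : Finset N} {eF : N → Fin cF} {b n : ℕ}

lemma encodeO_isSome {d : ℕ} {p : Prof T N} (hok : ProfOK b F d p) (hnum : NumLE n p) :
    ∃ e, encodeO (T := T) eF b n d p = some e := by
  cases hok with
  | @mk B pl ql cs d hB hlen hch =>
    cases hnum with
    | mk hpl hql hch' =>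
      rw [encodeO]
      rw [dif_pos ⟨by omega, by omega⟩]
      exact ⟨_, rfl⟩

lemma encodeO_inj (hinj : Set.InjOn eF F) : ∀ (d : ℕ) (p1 p2 : Prof T N),
    ProfOK b F d p1 → NumLE n p1 → ProfOK b F d p2 → NumLE n p2 →
    encodeO (T := T) eF b n d p1 = encodeO (T := T) eF b n d p2 → p1 = p2 := by
  intro d
  induction d with
  | zero => intro p1 p2 h1; exact absurd h1 (by intro h; cases h)
  | succ d ih =>
    rintro ⟨B1, pl1, ql1, cs1⟩ ⟨B2, pl2, ql2, cs2⟩ hok1 hnum1 hok2 hnum2 heq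
    cases hok1 with
    | mk hB1 hlen1 hch1 =>
      cases hok2 with
      | mk hB2 hlen2 hch2 =>
        cases hnum1 with
        | mk hpl1 hql1 hchn1 =>
          cases hnum2 with
          | mk hpl2 hql2 hchn2 =>
            rw [encodeO, dif_pos ⟨by omega, by omega⟩] at heq
            rw [encodeO, dif_pos ⟨by omega, by omega⟩] at heq
            have h4 : ((⟨eF B1, ⟨pl1, by omega⟩, ⟨ql1, by omega⟩,
                  fun i : Fin b => slotOf eF b n d (cs1[i.1]?)⟩ :
                Fin cF × Fin (n + 1) × Fin (n + 1) ×
                  (Fin b → Option (T ⊕ Enc T cF b n d)))) =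
                ⟨eF B2, ⟨pl2, by omega⟩, ⟨ql2, by omega⟩,
                  fun i : Fin b => slotOf eF b n d (cs2[i.1]?)⟩ :=
              Option.some.inj heq
            simp only [Prod.mk.injEq, Fin.mk.injEq] at h4
            obtain ⟨hBeq, hpl, hql, hfun⟩ := h4
            have hBeq' : B1 = B2 := hinj hB1 hB2 hBeq
            have hcs : cs1 = cs2 := by
              apply List.ext_getElem?
              intro i
              by_cases hib : i < b
              · have hfi := congrFun hfun ⟨i, hib⟩
                simp only at hfi
                obtain ⟨o1, h1⟩ : ∃ o, cs1[i]? = o := ⟨_, rfl⟩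
                obtain ⟨o2, h2⟩ : ∃ o, cs2[i]? = o := ⟨_, rfl⟩
                rw [h1, h2] at hfi ⊢
                rcases o1 with _ | c1 <;> rcases o2 with _ | c2
                · rfl
                · exfalso
                  cases c2 with
                  | inl t => simp [slotOf] at hfi
                  | inr p' =>
                    obtain ⟨e, he⟩ := encodeO_isSome (eF := eF) (hch2 p' (List.mem_of_getElem? h2))
                      (hchn2 p' (List.mem_of_getElem? h2))
                    simp [slotOf, he] at hfi
                · exfalso
                  cases c1 with
                  | inl t => simp [slotOf] at hfi
                  | inr p' =>
                    obtain ⟨e, he⟩ := encodeO_isSome (eF := eF) (hch1 p' (List.mem_of_getElem? h1))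
                      (hchn1 p' (List.mem_of_getElem? h1))
                    simp [slotOf, he] at hfi
                · cases c1 with
                  | inl t1 =>
                    cases c2 with
                    | inl t2 =>
                      simp only [slotOf, Option.some.injEq, Sum.inl.injEq] at hfi
                      rw [hfi]
                    | inr p2' =>
                      exfalso
                      obtain ⟨e, he⟩ := encodeO_isSome (eF := eF) (hch2 p2' (List.mem_of_getElem? h2))
                        (hchn2 p2' (List.mem_of_getElem? h2))
                      simp [slotOf, he] at hfi
                  | inr p1' =>
                    cases c2 with
                    | inl t2 =>
                      exfalso
                      obtain ⟨e, he⟩ := encodeO_isSome (eF := eF) (hch1 p1' (List.mem_of_getElem? h1))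
                        (hchn1 p1' (List.mem_of_getElem? h1))
                      simp [slotOf, he] at hfi
                    | inr p2' =>
                      obtain ⟨e1, he1⟩ := encodeO_isSome (eF := eF) (hch1 p1' (List.mem_of_getElem? h1))
                        (hchn1 p1' (List.mem_of_getElem? h1))
                      obtain ⟨e2, he2⟩ := encodeO_isSome (eF := eF) (hch2 p2' (List.mem_of_getElem? h2))
                        (hchn2 p2' (List.mem_of_getElem? h2))
                      simp only [slotOf, he1, he2, Option.map_some, Option.some.injEq,
                        Sum.inr.injEq] at hfi
                      have hp : p1' = p2' := by
                        apply ih p1' p2' (hch1 p1' (List.mem_of_getElem? h1))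
                          (hchn1 p1' (List.mem_of_getElem? h1)) (hch2 p2' (List.mem_of_getElem? h2))
                          (hchn2 p2' (List.mem_of_getElem? h2))
                        rw [he1, he2, hfi]
                      rw [hp]
              · have e1 : cs1[i]? = none := List.getElem?_eq_none_iff.mpr (by omega)
                have e2 : cs2[i]? = none := List.getElem?_eq_none_iff.mpr (by omega)
                rw [e1, e2]
            rw [hBeq', hpl, hql, hcs]

/-- Polynomial constants. -/
def KC (cT cF b : ℕ) : ℕ → ℕ
  | 0 => 1
  | d + 1 => cF * (1 + cT + KC cT cF b d) ^ b

def EC (b : ℕ) : ℕ → ℕ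
  | 0 => 0
  | d + 1 => 2 + b * EC b d

lemma card_enc_le {cF : ℕ} [Fintype T] :
    ∀ d, Fintype.card (Enc T cF b n d) ≤ KC (Fintype.card T) cF b d * (n + 1) ^ EC b d := by
  intro d
  induction d with
  | zero =>
    have : Fintype.card (Enc T cF b n 0) = 0 := by
      simp only [Enc]
      exact Fintype.card_eq_zero
    simp [this]
  | succ d ih =>
    have hcard : Fintype.card (Enc T cF b n (d + 1)) =
        cF * ((n + 1) * ((n + 1) *
          (1 + (Fintype.card T + Fintype.card (Enc T cF b n d))) ^ b)) := by
      show Fintype.card (Fin cF × Fin (n + 1) × Fin (n + 1) ×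
        (Fin b → Option (T ⊕ Enc T cF b n d))) = _
      simp only [Fintype.card_prod, Fintype.card_fun, Fintype.card_option, Fintype.card_sum,
        Fintype.card_fin]
      ring
    rw [hcard]
    have h1 : 1 + (Fintype.card T + Fintype.card (Enc T cF b n d)) ≤
        (1 + Fintype.card T + KC (Fintype.card T) cF b d) * (n + 1) ^ EC b d := by
      have hone : 1 ≤ (n + 1) ^ EC b d := Nat.one_le_pow _ _ (by omega)
      calc 1 + (Fintype.card T + Fintype.card (Enc T cF b n d))
          ≤ 1 + Fintype.card T + KC (Fintype.card T) cF b d * (n + 1) ^ EC b d := by omega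
        _ ≤ (1 + Fintype.card T) * (n + 1) ^ EC b d
            + KC (Fintype.card T) cF b d * (n + 1) ^ EC b d := by
            have := Nat.mul_le_mul_left (1 + Fintype.card T) hone
            omega
        _ = (1 + Fintype.card T + KC (Fintype.card T) cF b d) * (n + 1) ^ EC b d := by ring
    calc cF * ((n + 1) * ((n + 1) *
          (1 + (Fintype.card T + Fintype.card (Enc T cF b n d))) ^ b))
        ≤ cF * ((n + 1) * ((n + 1) *
          ((1 + Fintype.card T + KC (Fintype.card T) cF b d) * (n + 1) ^ EC b d) ^ b)) := by
          apply Nat.mul_le_mul_left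
          apply Nat.mul_le_mul_left
          apply Nat.mul_le_mul_left
          exact Nat.pow_le_pow_left h1 b
      _ = KC (Fintype.card T) cF b (d + 1) * (n + 1) ^ EC b (d + 1) := by
          rw [KC, EC, mul_pow, ← pow_mul]
          ring

end LexAux


namespace LexAux

open scoped ENNReal

lemma exists_injOn_fin {N : Type uN} (F : Finset N) :
    ∃ eF : N → Fin (F.card + 1), Set.InjOn eF (F : Set N) := by
  classical
  let e : {x // x ∈ F} ≃ Fin F.card := Fintype.equivFinOfCardEq (Fintype.card_coe F)
  refine ⟨fun B => if h : B ∈ F then (e ⟨B, h⟩).castSucc else Fin.last _, ?_⟩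
  intro x hx y hy hxy
  simp only at hxy
  rw [dif_pos (Finset.mem_coe.mp hx), dif_pos (Finset.mem_coe.mp hy)] at hxy
  have h1 : e ⟨x, hx⟩ = e ⟨y, hy⟩ := Fin.castSucc_injective _ hxy
  have h2 := e.injective h1
  simpa using congrArg Subtype.val h2

theorem main_bound {T : Type} [Fintype T] [PartialOrder T]
    (G : ContextFreeGrammar T)
    (hL : ∀ A : G.NT, IsChainLang (· < ·) (cfgL G A))
    (hR : ∀ A : G.NT, ∀ w : List T, IsChainLang (· < ·) (cfgR G A w))
    (L' : Set (List T)) (hsub : L' ⊆ (G.language : Set (List T)))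
    (hanti : AntichainFamily (· < ·) L') :
    ∃ C k : ℕ, ∀ n : ℕ, countLen L' n ≤ C * (n + 1) ^ k := by
  classical
  set F : Finset G.NT := G.rules.image (fun r => r.input) with hF_def
  set b : ℕ := G.rules.sup (fun r => r.output.length) with hb_def
  refine ⟨KC (Fintype.card T) (F.card + 1) b F.card + 2, EC b F.card, fun n => ?_⟩
  have hb1 : ∀ r ∈ G.rules, r.output.length ≤ b := fun r hr => by
    rw [hb_def]; exact Finset.le_sup (f := fun r => r.output.length) hr
  have hF1 : ∀ r ∈ G.rules, r.input ∈ F := fun r hr => Finset.mem_image_of_mem _ hr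
  have hex : ∀ w, w ∈ L' → ∃ p : Prof T G.NT, Fits G p w ∧ ProfOK b F F.card p := by
    intro w hw
    have hlang : G.Derives [Symbol.nonterminal G.initial] (w.map Symbol.terminal) := hsub hw
    obtain ⟨kk, hkk⟩ := derives_iff_derivesIn.mp hlang
    obtain ⟨t, hwt, hlab, hyt⟩ := derivesIn_tree kk G.initial w hkk
    obtain ⟨p, hfit, hok, _⟩ := tree_profile hb1 hF1 (sizeOf t) t ∅ le_rfl hwt
      ⟨Finset.notMem_empty _, fun _ _ => Finset.notMem_empty _⟩
    rw [hyt] at hfit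
    rw [Finset.sdiff_empty] at hok
    exact ⟨p, hfit, hok⟩
  obtain ⟨eF, heFinj⟩ := exists_injOn_fin F
  -- injection from the slice into the encoding space
  have hinj : Set.InjOn (fun w : List T =>
      if h : ∃ p : Prof T G.NT, Fits G p w ∧ ProfOK b F F.card p then
        some (encodeO (T := T) eF b n F.card (Classical.choose h)) else none)
      {w ∈ L' | w.length = n} := by
    intro w1 hw1 w2 hw2 heq
    simp only at heq
    have hex1 := hex w1 hw1.1
    have hex2 := hex w2 hw2.1
    rw [dif_pos hex1, dif_pos hex2] at heq
    have hc1 := Classical.choose_spec hex1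
    have hc2 := Classical.choose_spec hex2
    have hnum1 : NumLE n (Classical.choose hex1) := by
      have := fits_numLE (sizeOf (Classical.choose hex1)) _ _ le_rfl hc1.1
      rwa [hw1.2] at this
    have hnum2 : NumLE n (Classical.choose hex2) := by
      have := fits_numLE (sizeOf (Classical.choose hex2)) _ _ le_rfl hc2.1
      rwa [hw2.2] at this
    have hpeq : Classical.choose hex1 = Classical.choose hex2 :=
      encodeO_inj heFinj F.card _ _ hc1.2 hnum1 hc2.2 hnum2 (Option.some.inj heq)
    have hfit2 : Fits G (Classical.choose hex1) w2 := hpeq ▸ hc2.1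
    have hcomp : LexComp (· < ·) w1 w2 :=
      comp2_lexComp (fits_comp2 hL hR (sizeOf (Classical.choose hex1)) _ le_rfl w1 w2
        hc1.1 hfit2)
    by_contra hne
    exact hanti n w1 hw1 w2 hw2 hne hcomp
  have hmaps : ∀ w ∈ {w ∈ L' | w.length = n}, (fun w : List T =>
      if h : ∃ p : Prof T G.NT, Fits G p w ∧ ProfOK b F F.card p then
        some (encodeO (T := T) eF b n F.card (Classical.choose h)) else none) w ∈
      (Set.univ : Set (Option (Option (Enc T (F.card + 1) b n F.card)))) :=
    fun _ _ => Set.mem_univ _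
  have hle := Set.ncard_le_ncard_of_injOn _ hmaps hinj Set.finite_univ
  rw [Set.ncard_univ, Nat.card_eq_fintype_card, Fintype.card_option, Fintype.card_option] at hle
  have hcard := card_enc_le (T := T) (b := b) (n := n) (cF := F.card + 1) F.card
  have hone : 1 ≤ (n + 1) ^ EC b F.card := Nat.one_le_pow _ _ (by omega)
  have h2P : 2 ≤ 2 * (n + 1) ^ EC b F.card := by omega
  calc countLen L' n ≤ Fintype.card (Enc T (F.card + 1) b n F.card) + 1 + 1 := hle
    _ ≤ KC (Fintype.card T) (F.card + 1) b F.card * (n + 1) ^ EC b F.card + 2 := by omega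
    _ ≤ KC (Fintype.card T) (F.card + 1) b F.card * (n + 1) ^ EC b F.card
        + 2 * (n + 1) ^ EC b F.card := by omega
    _ = (KC (Fintype.card T) (F.card + 1) b F.card + 2) * (n + 1) ^ EC b F.card := by ring

theorem polyGrowth_of_poly_bound {α : Type u} (L : Set (List α)) (C k : ℕ)
    (h : ∀ n : ℕ, countLen L n ≤ C * (n + 1) ^ k) : PolyGrowth L := by
  refine ⟨k, ?_⟩
  have hev : ∀ᶠ n : ℕ in Filter.atTop,
      (countLen L n : ℝ≥0∞) / (n : ℝ≥0∞) ^ k ≤ ((C * 2 ^ k : ℕ) : ℝ≥0∞) := by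
    rw [Filter.eventually_atTop]
    refine ⟨1, fun n hn => ?_⟩
    have hnat : countLen L n ≤ (C * 2 ^ k) * n ^ k := by
      have h1 : (n + 1) ^ k ≤ (2 * n) ^ k := Nat.pow_le_pow_left (by omega) k
      calc countLen L n ≤ C * (n + 1) ^ k := h n
        _ ≤ C * (2 * n) ^ k := Nat.mul_le_mul_left _ h1
        _ = (C * 2 ^ k) * n ^ k := by rw [Nat.mul_pow]; ring
    have hcast : (countLen L n : ℝ≥0∞) ≤ ((C * 2 ^ k : ℕ) : ℝ≥0∞) * ((n : ℝ≥0∞)) ^ k := by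
      exact_mod_cast hnat
    have hden0 : ((n : ℝ≥0∞)) ^ k ≠ 0 :=
      pow_ne_zero _ (Nat.cast_ne_zero.mpr (by omega))
    have hdentop : ((n : ℝ≥0∞)) ^ k ≠ ⊤ := ENNReal.pow_ne_top (ENNReal.natCast_ne_top n)
    calc (countLen L n : ℝ≥0∞) / (n : ℝ≥0∞) ^ k
        ≤ (((C * 2 ^ k : ℕ) : ℝ≥0∞) * (n : ℝ≥0∞) ^ k) / (n : ℝ≥0∞) ^ k :=
          ENNReal.div_le_div_right hcast _
      _ = ((C * 2 ^ k : ℕ) : ℝ≥0∞) := by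
          rw [mul_div_assoc, ENNReal.div_self hden0 hdentop, mul_one]
  have hlim := Filter.limsup_le_of_le (by isBoundedDefault) hev
  exact lt_of_le_of_lt hlim (ENNReal.natCast_lt_top _)

end LexAux


/-- If every nonterminal of `G` is bireachable and all the sets `L_A(G)` and `R_{A,w}(G)`
are chains, then `L(G)` has polynomial antichain growth. -/
theorem cfg_chains_poly_antichain_growth {T : Type} [Fintype T] [PartialOrder T]
    (G : ContextFreeGrammar T)
    (hbi : ∀ A : G.NT, CfgBireachable G A)
    (hL : ∀ A : G.NT, IsChainLang (· < ·) (cfgL G A))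
    (hR : ∀ A : G.NT, ∀ w : List T, IsChainLang (· < ·) (cfgR G A w)) :
    PolyAntichainGrowth (· < ·) (G.language : Set (List T)) := by
  intro L' hsub hanti
  obtain ⟨C, k, hbd⟩ := LexAux.main_bound G hL hR L' hsub hanti
  exact LexAux.polyGrowth_of_poly_bound L' C k hbd
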